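/- arXiv:2507.03712 — 2 statements merged into one kernel-verified Lean document; each statement's English description precedes it below -/
import Mathlib

section
/- For a semi-explicit index-1 DAE with true solution (y,z) (ẏ = f(y,z), g(y,z) = 0) and approximate solution (Y,Z), let (φ^{(y)}, φ^{(z)}) solve the adjoint DAE with ψ = 0 and terminal condition φ^{(y)}(T) = ζ^y - ḡ_yᵀ (ḡ_zᵀ)⁻¹|_{t=T} ζ^z, where ḡ_z(T) is invertible. Then the terminal-time QoI error satisfies (ζ^y, e^{(y)}(T)) + (ζ^z, e^{(z)}(T)) = (φ^{(y)}(0), e^{(y)}(0)) + ∫₀ᵀ (φ^{(y)}, f(Y,Z) - Ẏ) dt + ∫₀ᵀ (φ^{(z)}, g(Y,Z)) dt - ((ḡ_zᵀ)⁻¹ ζ^z, g(Y,Z))|_{t=T}. -/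
open Matrix MeasureTheory

/-- The averaged Jacobian matrix `∫₀¹ DF(s) (c s) ds`. -/
noncomputable def avgJac {p q : ℕ} (F : ℝ → (Fin p → ℝ) → (Fin q → ℝ))
    (c : ℝ → Fin p → ℝ) : Matrix (Fin q) (Fin p) ℝ :=
  LinearMap.toMatrix'
    ((∫ s in (0:ℝ)..1, fderiv ℝ (F s) (c s)).toLinearMap)

/-- `(Aᵀ *ᵥ u) ⬝ᵥ v = u ⬝ᵥ (A *ᵥ v)`. -/
lemma dot_transpose {p q : ℕ} (A : Matrix (Fin p) (Fin q) ℝ) (u : Fin p → ℝ) (v : Fin q → ℝ) :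
    (Aᵀ *ᵥ u) ⬝ᵥ v = u ⬝ᵥ (A *ᵥ v) := by
  rw [dotProduct_comm, dotProduct_mulVec, vecMul_transpose, dotProduct_comm]

/-- Derivative of a dot product of two vector-valued functions. -/
lemma hasDerivAt_dot {k : ℕ} {u v : ℝ → Fin k → ℝ} {u' v' : Fin k → ℝ} {t : ℝ}
    (hu : HasDerivAt u u' t) (hv : HasDerivAt v v' t) :
    HasDerivAt (fun t => u t ⬝ᵥ v t) (u' ⬝ᵥ v t + u t ⬝ᵥ v') t := by
  have : HasDerivAt (fun t => ∑ i : Fin k, u t i * v t i)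
      (∑ i : Fin k, (u' i * v t i + u t i * v' i)) t :=
    HasDerivAt.fun_sum fun i _ => (hasDerivAt_pi.mp hu i).fun_mul (hasDerivAt_pi.mp hv i)
  simpa [dotProduct, Finset.sum_add_distrib] using this

private lemma seg_hasDerivAt {k : ℕ} (a b : Fin k → ℝ) (s : ℝ) :
    HasDerivAt (fun s : ℝ => s • a + (1 - s) • b) (a - b) s := by
  have h1 : HasDerivAt (fun s : ℝ => s • a) ((1:ℝ) • a) s :=
    (hasDerivAt_id s).smul_const a
  have h2 : HasDerivAt (fun s : ℝ => (1 - s) • b) ((0 - 1 : ℝ) • b) s :=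
    ((hasDerivAt_const s (1:ℝ)).sub (hasDerivAt_id s)).smul_const b
  have := h1.fun_add h2
  refine this.congr_deriv ?_
  ext i
  simp [Pi.smul_apply]
  ring

private lemma seg_continuous {k : ℕ} (a b : Fin k → ℝ) :
    Continuous (fun s : ℝ => s • a + (1 - s) • b) :=
  (continuous_id.smul continuous_const).add
    ((continuous_const.sub continuous_id).smul continuous_const)

/-- Mean value theorem in integral form, split into the two averaged partial Jacobians. -/
lemma mvt_avgJac {n m p : ℕ} (F : (Fin n → ℝ) × (Fin m → ℝ) → (Fin p → ℝ))
    (hF : ContDiff ℝ 1 F) (a b : Fin n → ℝ) (c d : Fin m → ℝ) :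
    F (a, c) - F (b, d)
      = (avgJac (fun s y' => F (y', s • c + (1 - s) • d)) (fun s => s • a + (1 - s) • b))
          *ᵥ (a - b)
      + (avgJac (fun s z' => F (s • a + (1 - s) • b, z')) (fun s => s • c + (1 - s) • d))
          *ᵥ (c - d) := by
  set cy : ℝ → Fin n → ℝ := fun s => s • a + (1 - s) • b with hcy_def
  set cz : ℝ → Fin m → ℝ := fun s => s • c + (1 - s) • d with hcz_def
  have hγcont : Continuous fun s => ((cy s, cz s) : (Fin n → ℝ) × (Fin m → ℝ)) :=
    (seg_continuous a b).prodMk (seg_continuous c d)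
  have hDcont : Continuous fun s => fderiv ℝ F (cy s, cz s) :=
    (hF.continuous_fderiv one_ne_zero).comp hγcont
  -- full derivative along the segment
  have hd : ∀ s : ℝ, HasDerivAt (fun s => F (cy s, cz s))
      (fderiv ℝ F (cy s, cz s) (a - b, c - d)) s := by
    intro s
    have hγ : HasDerivAt (fun s => ((cy s, cz s) : (Fin n → ℝ) × (Fin m → ℝ)))
        ((a - b, c - d)) s := (seg_hasDerivAt a b s).prodMk (seg_hasDerivAt c d s)
    exact ((hF.differentiable one_ne_zero (cy s, cz s)).hasFDerivAt).comp_hasDerivAt s hγ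
  have hcy1 : cy 1 = a := by ext i; simp [hcy_def]
  have hcy0 : cy 0 = b := by ext i; simp [hcy_def]
  have hcz1 : cz 1 = c := by ext i; simp [hcz_def]
  have hcz0 : cz 0 = d := by ext i; simp [hcz_def]
  have hFTC : (∫ s in (0:ℝ)..1, fderiv ℝ F (cy s, cz s) (a - b, c - d))
      = F (a, c) - F (b, d) := by
    rw [intervalIntegral.integral_eq_sub_of_hasDerivAt (fun s _ => hd s)
      ((hDcont.clm_apply continuous_const).intervalIntegrable 0 1)]
    rw [hcy1, hcy0, hcz1, hcz0]
  -- partial derivatives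
  have hpart1 : ∀ s : ℝ, fderiv ℝ (fun y' => F (y', cz s)) (cy s)
      = (fderiv ℝ F (cy s, cz s)).comp (ContinuousLinearMap.inl ℝ _ _) := by
    intro s
    have h : HasFDerivAt (fun y' => F (y', cz s))
        ((fderiv ℝ F (cy s, cz s)).comp (ContinuousLinearMap.inl ℝ _ _)) (cy s) :=
      ((hF.differentiable one_ne_zero (cy s, cz s)).hasFDerivAt).comp (cy s)
        ((hasFDerivAt_id (cy s)).prodMk (hasFDerivAt_const (cz s) (cy s)))
    exact h.fderiv
  have hpart2 : ∀ s : ℝ, fderiv ℝ (fun z' => F (cy s, z')) (cz s)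
      = (fderiv ℝ F (cy s, cz s)).comp (ContinuousLinearMap.inr ℝ _ _) := by
    intro s
    have h : HasFDerivAt (fun z' => F (cy s, z'))
        ((fderiv ℝ F (cy s, cz s)).comp (ContinuousLinearMap.inr ℝ _ _)) (cz s) :=
      ((hF.differentiable one_ne_zero (cy s, cz s)).hasFDerivAt).comp (cz s)
        ((hasFDerivAt_const (cy s) (cz s)).prodMk (hasFDerivAt_id (cz s)))
    exact h.fderiv
  have hint1 : IntervalIntegrable
      (fun s => (fderiv ℝ F (cy s, cz s)).comp
        (ContinuousLinearMap.inl ℝ (Fin n → ℝ) (Fin m → ℝ))) volume 0 1 :=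
    (hDcont.clm_comp continuous_const).intervalIntegrable 0 1
  have hint2 : IntervalIntegrable
      (fun s => (fderiv ℝ F (cy s, cz s)).comp
        (ContinuousLinearMap.inr ℝ (Fin n → ℝ) (Fin m → ℝ))) volume 0 1 :=
    (hDcont.clm_comp continuous_const).intervalIntegrable 0 1
  have key1 : (avgJac (fun s y' => F (y', cz s)) cy) *ᵥ (a - b)
      = ∫ s in (0:ℝ)..1, fderiv ℝ F (cy s, cz s) (a - b, 0) := by
    rw [← Matrix.toLin'_apply, avgJac, Matrix.toLin'_toMatrix']
    simp only [ContinuousLinearMap.coe_coe]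
    simp_rw [hpart1]
    rw [ContinuousLinearMap.intervalIntegral_apply hint1 (a - b)]
    simp
  have key2 : (avgJac (fun s z' => F (cy s, z')) cz) *ᵥ (c - d)
      = ∫ s in (0:ℝ)..1, fderiv ℝ F (cy s, cz s) (0, c - d) := by
    rw [← Matrix.toLin'_apply, avgJac, Matrix.toLin'_toMatrix']
    simp only [ContinuousLinearMap.coe_coe]
    simp_rw [hpart2]
    rw [ContinuousLinearMap.intervalIntegral_apply hint2 (c - d)]
    simp
  rw [key1, key2, ← hFTC,
    ← intervalIntegral.integral_add
      ((hDcont.clm_apply continuous_const).intervalIntegrable 0 1)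
      ((hDcont.clm_apply continuous_const).intervalIntegrable 0 1)]
  refine intervalIntegral.integral_congr fun s _ => ?_
  rw [← map_add]
  congr 1
  ext <;> simp

/-- Adjoint error identity (Lemma `adj_error`) for a semi-explicit DAE. -/
theorem index1_terminal_qoi_error {n m : ℕ} (T : ℝ) (hT : 0 < T)
    (f : (Fin n → ℝ) × (Fin m → ℝ) → (Fin n → ℝ))
    (g : (Fin n → ℝ) × (Fin m → ℝ) → (Fin m → ℝ))
    (hf : ContDiff ℝ 1 f) (hg : ContDiff ℝ 1 g)
    (y Y Y' φy : ℝ → Fin n → ℝ) (z Z φz : ℝ → Fin m → ℝ)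
    (ζy : Fin n → ℝ) (ζz : Fin m → ℝ)
    (fby : ℝ → Matrix (Fin n) (Fin n) ℝ) (fbz : ℝ → Matrix (Fin n) (Fin m) ℝ)
    (gby : ℝ → Matrix (Fin m) (Fin n) ℝ) (gbz : ℝ → Matrix (Fin m) (Fin m) ℝ)
    -- the averaged Jacobians along the segment between (y,z) and (Y,Z)
    (hfby : ∀ t, fby t = avgJac (fun s y' => f (y', s • z t + (1 - s) • Z t))
      (fun s => s • y t + (1 - s) • Y t))
    (hfbz : ∀ t, fbz t = avgJac (fun s z' => f (s • y t + (1 - s) • Y t, z'))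
      (fun s => s • z t + (1 - s) • Z t))
    (hgby : ∀ t, gby t = avgJac (fun s y' => g (y', s • z t + (1 - s) • Z t))
      (fun s => s • y t + (1 - s) • Y t))
    (hgbz : ∀ t, gbz t = avgJac (fun s z' => g (s • y t + (1 - s) • Y t, z'))
      (fun s => s • z t + (1 - s) • Z t))
    -- the true solution of the DAE
    (hy : ∀ t ∈ Set.Icc (0:ℝ) T, HasDerivAt y (f (y t, z t)) t)
    (hcon : ∀ t ∈ Set.Icc (0:ℝ) T, g (y t, z t) = 0)
    -- the approximate solution and its derivative
    (hY : ∀ t ∈ Set.Icc (0:ℝ) T, HasDerivAt Y (Y' t) t)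
    -- the adjoint DAE
    (hadj1 : ∀ t ∈ Set.Ico (0:ℝ) T,
      HasDerivAt φy (-((fby t)ᵀ *ᵥ φy t + (gby t)ᵀ *ᵥ φz t)) t)
    (hadj2 : ∀ t ∈ Set.Ico (0:ℝ) T,
      (fbz t)ᵀ *ᵥ φy t + (gbz t)ᵀ *ᵥ φz t = 0)
    -- sufficient smoothness for the integrals and integration by parts
    (hyc : Continuous y) (hYc : Continuous Y) (hY'c : Continuous Y')
    (hzc : Continuous z) (hZc : Continuous Z)
    (hφyc : Continuous φy) (hφzc : Continuous φz)
    -- invertibility of the averaged constraint Jacobian at the terminal time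
    (hinv : IsUnit (gbz T))
    -- adjoint terminal condition
    (hφT : φy T = ζy - (gby T)ᵀ *ᵥ (((gbz T)ᵀ)⁻¹ *ᵥ ζz)) :
    ζy ⬝ᵥ (y T - Y T) + ζz ⬝ᵥ (z T - Z T)
    = φy 0 ⬝ᵥ (y 0 - Y 0)
      + (∫ t in (0:ℝ)..T, φy t ⬝ᵥ (f (Y t, Z t) - Y' t))
      + (∫ t in (0:ℝ)..T, φz t ⬝ᵥ g (Y t, Z t))
      - (((gbz T)ᵀ)⁻¹ *ᵥ ζz) ⬝ᵥ g (Y T, Z T) := by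
  set w : Fin m → ℝ := ((gbz T)ᵀ)⁻¹ *ᵥ ζz with hw_def
  -- mean value identities
  have Hf : ∀ t, f (y t, z t) - f (Y t, Z t)
      = fby t *ᵥ (y t - Y t) + fbz t *ᵥ (z t - Z t) := by
    intro t; rw [hfby, hfbz]; exact mvt_avgJac f hf (y t) (Y t) (z t) (Z t)
  have Hg : ∀ t ∈ Set.Icc (0:ℝ) T, -g (Y t, Z t)
      = gby t *ᵥ (y t - Y t) + gbz t *ᵥ (z t - Z t) := by
    intro t ht
    have := mvt_avgJac g hg (y t) (Y t) (z t) (Z t)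
    rw [← hgby, ← hgbz, hcon t ht, zero_sub] at this
    exact this
  -- continuity of the integrands
  have hcYZ : Continuous fun t => f (Y t, Z t) :=
    hf.continuous.comp (hYc.prodMk hZc)
  have hcgYZ : Continuous fun t => g (Y t, Z t) :=
    hg.continuous.comp (hYc.prodMk hZc)
  have hc1 : Continuous fun t => φy t ⬝ᵥ (f (Y t, Z t) - Y' t) :=
    hφyc.dotProduct (hcYZ.sub hY'c)
  have hc2 : Continuous fun t => φz t ⬝ᵥ g (Y t, Z t) :=
    hφzc.dotProduct hcgYZ
  -- derivative of Φ t = φy t ⬝ᵥ (y t - Y t)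
  have hΦ : ∀ t ∈ Set.Ioo (0:ℝ) T, HasDerivAt (fun t => φy t ⬝ᵥ (y t - Y t))
      (φy t ⬝ᵥ (f (Y t, Z t) - Y' t) + φz t ⬝ᵥ g (Y t, Z t)) t := by
    intro t ht
    have htIcc : t ∈ Set.Icc (0:ℝ) T := ⟨ht.1.le, ht.2.le⟩
    have htIco : t ∈ Set.Ico (0:ℝ) T := ⟨ht.1.le, ht.2⟩
    have hder := hasDerivAt_dot (hadj1 t htIco) ((hy t htIcc).fun_sub (hY t htIcc))
    convert hder using 1
    -- algebra of the derivative value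
    have h1 : φy t ⬝ᵥ (f (y t, z t)) - φy t ⬝ᵥ (f (Y t, Z t))
        = φy t ⬝ᵥ (fby t *ᵥ (y t - Y t)) + φy t ⬝ᵥ (fbz t *ᵥ (z t - Z t)) := by
      rw [← dotProduct_sub, ← dotProduct_add, Hf t]
    have h2 : -(φz t ⬝ᵥ g (Y t, Z t))
        = φz t ⬝ᵥ (gby t *ᵥ (y t - Y t)) + φz t ⬝ᵥ (gbz t *ᵥ (z t - Z t)) := by
      rw [← dotProduct_neg, ← dotProduct_add, Hg t htIcc]
    have h3 : φy t ⬝ᵥ (fbz t *ᵥ (z t - Z t)) + φz t ⬝ᵥ (gbz t *ᵥ (z t - Z t)) = 0 := by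
      rw [← dot_transpose, ← dot_transpose, ← add_dotProduct, hadj2 t htIco,
        zero_dotProduct]
    rw [neg_add, add_dotProduct, neg_dotProduct, neg_dotProduct,
      dot_transpose, dot_transpose, dotProduct_sub, dotProduct_sub]
    linarith
  -- fundamental theorem of calculus
  have key : ∫ t in (0:ℝ)..T,
      (φy t ⬝ᵥ (f (Y t, Z t) - Y' t) + φz t ⬝ᵥ g (Y t, Z t))
      = φy T ⬝ᵥ (y T - Y T) - φy 0 ⬝ᵥ (y 0 - Y 0) := by
    refine intervalIntegral.integral_eq_sub_of_hasDeriv_right_of_le hT.le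
      ((hφyc.dotProduct (hyc.sub hYc)).continuousOn)
      (fun x hx => ((hΦ x hx).hasDerivWithinAt))
      ((hc1.add hc2).intervalIntegrable 0 T)
  have hsplit : ∫ t in (0:ℝ)..T,
      (φy t ⬝ᵥ (f (Y t, Z t) - Y' t) + φz t ⬝ᵥ g (Y t, Z t))
      = (∫ t in (0:ℝ)..T, φy t ⬝ᵥ (f (Y t, Z t) - Y' t))
        + (∫ t in (0:ℝ)..T, φz t ⬝ᵥ g (Y t, Z t)) :=
    intervalIntegral.integral_add (hc1.intervalIntegrable 0 T)
      (hc2.intervalIntegrable 0 T)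
  -- terminal-time algebra
  have hwz : (gbz T)ᵀ *ᵥ w = ζz := by
    rw [hw_def, mulVec_mulVec, Matrix.mul_nonsing_inv _
      (by rw [Matrix.det_transpose]; exact (Matrix.isUnit_iff_isUnit_det _).mp hinv),
      one_mulVec]
  have hTIcc : T ∈ Set.Icc (0:ℝ) T := ⟨hT.le, le_rfl⟩
  have hgT : -(w ⬝ᵥ g (Y T, Z T))
      = w ⬝ᵥ (gby T *ᵥ (y T - Y T)) + w ⬝ᵥ (gbz T *ᵥ (z T - Z T)) := by
    rw [← dotProduct_neg, ← dotProduct_add, Hg T hTIcc]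
  have hzT : ζz ⬝ᵥ (z T - Z T) = w ⬝ᵥ (gbz T *ᵥ (z T - Z T)) := by
    rw [← hwz, dot_transpose]
  have hyT : φy T ⬝ᵥ (y T - Y T)
      = ζy ⬝ᵥ (y T - Y T) - w ⬝ᵥ (gby T *ᵥ (y T - Y T)) := by
    rw [hφT, sub_dotProduct, dot_transpose]
  rw [hsplit] at key
  linarith [key, hgT, hzT, hyT]
end

section
/- In the index-1 setting with adjoint data ψ = 0 and terminal condition φ^{(y)}(T) = ζ^y (i.e., ζ^z = 0), the error in the terminal-time QoI depending only on the differential variables satisfies (e^{(y)}(T), ζ^y) = (φ^{(y)}(0), e^{(y)}(0)) + ∫₀ᵀ (φ^{(y)}, f(Y,Z) - Ẏ) dt + ∫₀ᵀ (φ^{(z)}, g(Y,Z)) dt. -/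
open Matrix MeasureTheory

lemma avgJac_mulVec {p q : ℕ} (F : ℝ → (Fin p → ℝ) → Fin q → ℝ) (c : ℝ → Fin p → ℝ)
    (w : Fin p → ℝ)
    (hInt : IntervalIntegrable (fun s => fderiv ℝ (F s) (c s)) volume 0 1) :
    avgJac F c *ᵥ w = ∫ s in (0:ℝ)..1, fderiv ℝ (F s) (c s) w := by
  unfold avgJac
  have h1 : (LinearMap.toMatrix' (∫ s in (0:ℝ)..1, fderiv ℝ (F s) (c s)).toLinearMap) *ᵥ w
      = (∫ s in (0:ℝ)..1, fderiv ℝ (F s) (c s)) w := by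
    rw [← Matrix.toLin'_apply, Matrix.toLin'_toMatrix']; rfl
  rw [h1, intervalIntegral.integral_of_le zero_le_one,
    intervalIntegral.integral_of_le zero_le_one]
  exact ContinuousLinearMap.integral_apply hInt.1 w

lemma segment_mvt {p q k : ℕ} (f : (Fin p → ℝ) × (Fin k → ℝ) → Fin q → ℝ)
    (hf : ContDiff ℝ 1 f) (a b : Fin p → ℝ) (u v : Fin k → ℝ) :
    f (a, u) - f (b, v)
      = (avgJac (fun s y' => f (y', s • u + (1 - s) • v)) (fun s => s • a + (1 - s) • b))
          *ᵥ (a - b)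
      + (avgJac (fun s z' => f (s • a + (1 - s) • b, z')) (fun s => s • u + (1 - s) • v))
          *ᵥ (u - v) := by
  set cy : ℝ → Fin p → ℝ := fun s => s • a + (1 - s) • b with hcy_def
  set cz : ℝ → Fin k → ℝ := fun s => s • u + (1 - s) • v with hcz_def
  have hcyC : Continuous cy := by
    apply Continuous.add
    · exact continuous_id.smul continuous_const
    · exact (continuous_const.sub continuous_id).smul continuous_const
  have hczC : Continuous cz := by
    apply Continuous.add
    · exact continuous_id.smul continuous_const
    · exact (continuous_const.sub continuous_id).smul continuous_const
  have hcy : ∀ s : ℝ, HasDerivAt cy (a - b) s := by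
    intro s
    have h1 : HasDerivAt (fun s : ℝ => s • (a - b) + b) (a - b) s := by
      simpa using ((hasDerivAt_id s).smul_const (a - b)).add_const b
    have : cy = fun s : ℝ => s • (a - b) + b := by
      funext s; simp only [hcy_def, smul_sub, sub_smul, one_smul]; abel
    rw [this]; exact h1
  have hcz : ∀ s : ℝ, HasDerivAt cz (u - v) s := by
    intro s
    have h1 : HasDerivAt (fun s : ℝ => s • (u - v) + v) (u - v) s := by
      simpa using ((hasDerivAt_id s).smul_const (u - v)).add_const v
    have : cz = fun s : ℝ => s • (u - v) + v := by
      funext s; simp only [hcz_def, smul_sub, sub_smul, one_smul]; abel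
    rw [this]; exact h1
  have hfd := hf.differentiable one_ne_zero
  have hDc : Continuous fun s => fderiv ℝ f (cy s, cz s) :=
    (hf.continuous_fderiv one_ne_zero).comp (hcyC.prodMk hczC)
  -- derivative of the composite
  have hD : ∀ s : ℝ, HasDerivAt (fun s => f (cy s, cz s))
      ((fderiv ℝ f (cy s, cz s)) (a - b, u - v)) s := fun s =>
    (hfd _).hasFDerivAt.comp_hasDerivAt s ((hcy s).prodMk (hcz s))
  have hFTC : (∫ s in (0:ℝ)..1, (fderiv ℝ f (cy s, cz s)) (a - b, u - v))
      = f (a, u) - f (b, v) := by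
    have hint : IntervalIntegrable (fun s => (fderiv ℝ f (cy s, cz s)) (a - b, u - v))
        volume 0 1 :=
      (((ContinuousLinearMap.apply ℝ (Fin q → ℝ) ((a - b, u - v) :
        (Fin p → ℝ) × (Fin k → ℝ))).continuous).comp hDc).intervalIntegrable 0 1
    have := intervalIntegral.integral_eq_sub_of_hasDerivAt (fun s _ => hD s) hint
    rw [this]
    have e1 : cy 1 = a := by simp [hcy_def]
    have e2 : cz 1 = u := by simp [hcz_def]
    have e3 : cy 0 = b := by simp [hcy_def]
    have e4 : cz 0 = v := by simp [hcz_def]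
    rw [e1, e2, e3, e4]
  -- partial derivatives
  have hpy : (fun s => fderiv ℝ (fun y' => f (y', cz s)) (cy s))
      = fun s => (fderiv ℝ f (cy s, cz s)).comp
        (ContinuousLinearMap.inl ℝ (Fin p → ℝ) (Fin k → ℝ)) := by
    funext s
    exact ((hfd _).hasFDerivAt.comp (cy s) (hasFDerivAt_prodMk_left (cy s) (cz s))).fderiv
  have hpz : (fun s => fderiv ℝ (fun z' => f (cy s, z')) (cz s))
      = fun s => (fderiv ℝ f (cy s, cz s)).comp
        (ContinuousLinearMap.inr ℝ (Fin p → ℝ) (Fin k → ℝ)) := by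
    funext s
    exact ((hfd _).hasFDerivAt.comp (cz s) (hasFDerivAt_prodMk_right (cy s) (cz s))).fderiv
  have hintY : IntervalIntegrable (fun s => fderiv ℝ (fun y' => f (y', cz s)) (cy s))
      volume 0 1 := by
    rw [hpy]
    exact ((hDc.clm_comp continuous_const)).intervalIntegrable 0 1
  have hintZ : IntervalIntegrable (fun s => fderiv ℝ (fun z' => f (cy s, z')) (cz s))
      volume 0 1 := by
    rw [hpz]
    exact ((hDc.clm_comp continuous_const)).intervalIntegrable 0 1
  have hAy := avgJac_mulVec (fun s y' => f (y', cz s)) cy (a - b) hintY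
  have hAz := avgJac_mulVec (fun s z' => f (cy s, z')) cz (u - v) hintZ
  rw [hAy, hAz, ← hFTC]
  have ey : (fun s => fderiv ℝ (fun y' => f (y', cz s)) (cy s) (a - b))
      = fun s => (fderiv ℝ f (cy s, cz s)) (a - b, (0 : Fin k → ℝ)) := by
    funext s; rw [congrFun hpy s]; simp
  have ez : (fun s => fderiv ℝ (fun z' => f (cy s, z')) (cz s) (u - v))
      = fun s => (fderiv ℝ f (cy s, cz s)) ((0 : Fin p → ℝ), u - v) := by
    funext s; rw [congrFun hpz s]; simp
  rw [ey, ez, ← intervalIntegral.integral_add]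
  · congr 1; funext s
    rw [← ContinuousLinearMap.map_add]
    congr 1
    simp [Prod.ext_iff]
  · exact (((ContinuousLinearMap.apply ℝ (Fin q → ℝ) ((a - b, (0:Fin k → ℝ)) :
        (Fin p → ℝ) × (Fin k → ℝ))).continuous).comp hDc).intervalIntegrable 0 1
  · exact (((ContinuousLinearMap.apply ℝ (Fin q → ℝ) (((0:Fin p → ℝ), u - v) :
        (Fin p → ℝ) × (Fin k → ℝ))).continuous).comp hDc).intervalIntegrable 0 1

lemma hasDerivAt_dotProduct' {n : ℕ} {u v : ℝ → Fin n → ℝ} {u' v' : Fin n → ℝ} {t : ℝ}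
    (hu : HasDerivAt u u' t) (hv : HasDerivAt v v' t) :
    HasDerivAt (fun t => u t ⬝ᵥ v t) (u' ⬝ᵥ v t + u t ⬝ᵥ v') t := by
  simp only [dotProduct]
  rw [← Finset.sum_add_distrib]
  exact HasDerivAt.fun_sum fun i _ => (hasDerivAt_pi.mp hu i).mul (hasDerivAt_pi.mp hv i)

lemma continuous_dotProduct' {n : ℕ} {u v : ℝ → Fin n → ℝ}
    (hu : Continuous u) (hv : Continuous v) :
    Continuous fun t => u t ⬝ᵥ v t := by
  simp only [dotProduct]
  exact continuous_finset_sum _ fun i _ =>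
    ((continuous_apply i).comp hu).mul ((continuous_apply i).comp hv)

lemma transpose_mulVec_dot {p q : ℕ} (M : Matrix (Fin p) (Fin q) ℝ)
    (x : Fin p → ℝ) (w : Fin q → ℝ) : (Mᵀ *ᵥ x) ⬝ᵥ w = x ⬝ᵥ (M *ᵥ w) := by
  rw [Matrix.dotProduct_mulVec, Matrix.mulVec_transpose]


/-- Adjoint error identity (Lemma `adj_error`) for a semi-explicit DAE. -/
theorem index1_terminal_qoi_error_differential_only {n m : ℕ} (T : ℝ) (hT : 0 < T)
    (f : (Fin n → ℝ) × (Fin m → ℝ) → (Fin n → ℝ))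
    (g : (Fin n → ℝ) × (Fin m → ℝ) → (Fin m → ℝ))
    (hf : ContDiff ℝ 1 f) (hg : ContDiff ℝ 1 g)
    (y Y Y' φy : ℝ → Fin n → ℝ) (z Z φz : ℝ → Fin m → ℝ)
    (ζy : Fin n → ℝ)
    (fby : ℝ → Matrix (Fin n) (Fin n) ℝ) (fbz : ℝ → Matrix (Fin n) (Fin m) ℝ)
    (gby : ℝ → Matrix (Fin m) (Fin n) ℝ) (gbz : ℝ → Matrix (Fin m) (Fin m) ℝ)
    -- the averaged Jacobians along the segment between (y,z) and (Y,Z)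
    (hfby : ∀ t, fby t = avgJac (fun s y' => f (y', s • z t + (1 - s) • Z t))
      (fun s => s • y t + (1 - s) • Y t))
    (hfbz : ∀ t, fbz t = avgJac (fun s z' => f (s • y t + (1 - s) • Y t, z'))
      (fun s => s • z t + (1 - s) • Z t))
    (hgby : ∀ t, gby t = avgJac (fun s y' => g (y', s • z t + (1 - s) • Z t))
      (fun s => s • y t + (1 - s) • Y t))
    (hgbz : ∀ t, gbz t = avgJac (fun s z' => g (s • y t + (1 - s) • Y t, z'))
      (fun s => s • z t + (1 - s) • Z t))
    -- the true solution of the DAE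
    (hy : ∀ t ∈ Set.Icc (0:ℝ) T, HasDerivAt y (f (y t, z t)) t)
    (hcon : ∀ t ∈ Set.Icc (0:ℝ) T, g (y t, z t) = 0)
    -- the approximate solution and its derivative
    (hY : ∀ t ∈ Set.Icc (0:ℝ) T, HasDerivAt Y (Y' t) t)
    -- the adjoint DAE
    (hadj1 : ∀ t ∈ Set.Ico (0:ℝ) T,
      HasDerivAt φy (-((fby t)ᵀ *ᵥ φy t + (gby t)ᵀ *ᵥ φz t)) t)
    (hadj2 : ∀ t ∈ Set.Ico (0:ℝ) T,
      (fbz t)ᵀ *ᵥ φy t + (gbz t)ᵀ *ᵥ φz t = 0)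
    -- sufficient smoothness for the integrals and integration by parts
    (hyc : Continuous y) (hYc : Continuous Y) (hY'c : Continuous Y')
    (hzc : Continuous z) (hZc : Continuous Z)
    (hφyc : Continuous φy) (hφzc : Continuous φz)
    -- adjoint terminal condition (ζᶻ = 0)
    (hφT : φy T = ζy) :
    (y T - Y T) ⬝ᵥ ζy
    = φy 0 ⬝ᵥ (y 0 - Y 0)
      + (∫ t in (0:ℝ)..T, φy t ⬝ᵥ (f (Y t, Z t) - Y' t))
      + (∫ t in (0:ℝ)..T, φz t ⬝ᵥ g (Y t, Z t)) := by
  set h : ℝ → ℝ := fun t => φy t ⬝ᵥ (y t - Y t) with hh_def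
  have hA : Continuous fun t => φy t ⬝ᵥ (f (Y t, Z t) - Y' t) :=
    continuous_dotProduct' hφyc ((hf.continuous.comp (hYc.prodMk hZc)).sub hY'c)
  have hB : Continuous fun t => φz t ⬝ᵥ g (Y t, Z t) :=
    continuous_dotProduct' hφzc (hg.continuous.comp (hYc.prodMk hZc))
  have hderiv : ∀ t ∈ Set.Ioo (0:ℝ) T, HasDerivAt h
      (φy t ⬝ᵥ (f (Y t, Z t) - Y' t) + φz t ⬝ᵥ g (Y t, Z t)) t := by
    intro t ht
    have htIcc : t ∈ Set.Icc (0:ℝ) T := ⟨le_of_lt ht.1, le_of_lt ht.2⟩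
    have htIco : t ∈ Set.Ico (0:ℝ) T := ⟨le_of_lt ht.1, ht.2⟩
    have hde : HasDerivAt (fun t => y t - Y t) (f (y t, z t) - Y' t) t :=
      (hy t htIcc).sub (hY t htIcc)
    have key := hasDerivAt_dotProduct' (hadj1 t htIco) hde
    convert key using 1
    -- scalar algebra
    set e := y t - Y t with he
    set d := z t - Z t with hd
    have F1 : f (y t, z t) - f (Y t, Z t) = fby t *ᵥ e + fbz t *ᵥ d := by
      rw [hfby t, hfbz t]; exact segment_mvt f hf (y t) (Y t) (z t) (Z t)
    have F2 : (0 : Fin m → ℝ) - g (Y t, Z t) = gby t *ᵥ e + gbz t *ᵥ d := by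
      rw [hgby t, hgbz t, ← hcon t htIcc]; exact segment_mvt g hg (y t) (Y t) (z t) (Z t)
    have A1 : φy t ⬝ᵥ f (y t, z t)
        = φy t ⬝ᵥ f (Y t, Z t) + φy t ⬝ᵥ (fby t *ᵥ e) + φy t ⬝ᵥ (fbz t *ᵥ d) := by
      have := congrArg (fun w => φy t ⬝ᵥ w) F1
      simp only [dotProduct_sub, dotProduct_add] at this
      linarith
    have A2 : φz t ⬝ᵥ g (Y t, Z t)
        = -(φz t ⬝ᵥ (gby t *ᵥ e)) - φz t ⬝ᵥ (gbz t *ᵥ d) := by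
      have := congrArg (fun w => φz t ⬝ᵥ w) F2
      simp only [dotProduct_sub, dotProduct_add,
        dotProduct_zero] at this
      linarith
    have A3 : φy t ⬝ᵥ (fbz t *ᵥ d) = -(φz t ⬝ᵥ (gbz t *ᵥ d)) := by
      have := congrArg (fun x => x ⬝ᵥ d) (hadj2 t htIco)
      simp only [add_dotProduct, zero_dotProduct,
        transpose_mulVec_dot] at this
      linarith
    have hT1 : (-((fby t)ᵀ *ᵥ φy t + (gby t)ᵀ *ᵥ φz t)) ⬝ᵥ e
        = -(φy t ⬝ᵥ (fby t *ᵥ e)) - φz t ⬝ᵥ (gby t *ᵥ e) := by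
      simp only [neg_dotProduct, add_dotProduct, transpose_mulVec_dot]
      ring
    have hT2 : φy t ⬝ᵥ (f (y t, z t) - Y' t)
        = φy t ⬝ᵥ f (y t, z t) - φy t ⬝ᵥ Y' t := dotProduct_sub _ _ _
    have hT3 : φy t ⬝ᵥ (f (Y t, Z t) - Y' t)
        = φy t ⬝ᵥ f (Y t, Z t) - φy t ⬝ᵥ Y' t := dotProduct_sub _ _ _
    rw [hT1, hT2, hT3, A1, A2]
    linarith
  have hcontOn : ContinuousOn h (Set.Icc 0 T) :=
    (continuous_dotProduct' hφyc (hyc.sub hYc)).continuousOn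
  have hintAB : IntervalIntegrable
      (fun t => φy t ⬝ᵥ (f (Y t, Z t) - Y' t) + φz t ⬝ᵥ g (Y t, Z t)) volume 0 T :=
    (hA.add hB).intervalIntegrable 0 T
  have hFTC : (∫ t in (0:ℝ)..T,
        (φy t ⬝ᵥ (f (Y t, Z t) - Y' t) + φz t ⬝ᵥ g (Y t, Z t))) = h T - h 0 :=
    intervalIntegral.integral_eq_sub_of_hasDeriv_right_of_le (le_of_lt hT) hcontOn
      (fun t ht => (hderiv t ht).hasDerivWithinAt) hintAB
  rw [intervalIntegral.integral_add (hA.intervalIntegrable 0 T)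
    (hB.intervalIntegrable 0 T)] at hFTC
  have hhT : h T = (y T - Y T) ⬝ᵥ ζy := by
    rw [hh_def]; simp only [hφT]; exact dotProduct_comm _ _
  have hh0 : h 0 = φy 0 ⬝ᵥ (y 0 - Y 0) := rfl
  linarith [hFTC, hhT.symm ▸ (rfl : h T = h T)]
end
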